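/- Left division is cancellative in the free left distributive algebra: for p, q, r in the free left distributive algebra A, p·q = p·r if and only if q = r. -/
import Mathlib


/-- Terms in one generator x with a binary operation ·. -/
inductive LDTerm : Type
  | x : LDTerm
  | mul : LDTerm → LDTerm → LDTerm

/-- The congruence generated by the left distributive law. -/
inductive LDEq : LDTerm → LDTerm → Prop
  | ld (a b c : LDTerm) :
      LDEq (LDTerm.mul a (LDTerm.mul b c)) (LDTerm.mul (LDTerm.mul a b) (LDTerm.mul a c))
  | refl (a : LDTerm) : LDEq a a
  | symm {a b : LDTerm} : LDEq a b → LDEq b a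
  | trans {a b c : LDTerm} : LDEq a b → LDEq b c → LDEq a c
  | congr {a b c d : LDTerm} : LDEq a b → LDEq c d → LDEq (LDTerm.mul a c) (LDTerm.mul b d)

instance LDTerm.setoid : Setoid LDTerm :=
  ⟨LDEq, LDEq.refl, LDEq.symm, LDEq.trans⟩

/-- The free left distributive algebra on one generator. -/
def FreeLD : Type := Quotient LDTerm.setoid

/-- The generator x of the free left distributive algebra. -/
def FreeLD.x : FreeLD := ⟦LDTerm.x⟧

/-- Multiplication on the free left distributive algebra. -/
def FreeLD.mul : FreeLD → FreeLD → FreeLD :=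
  Quotient.map₂ LDTerm.mul fun _ _ h _ _ h' => LDEq.congr h h'

/-- a <_L b : b = a·c₀·c₁·...·c_n (left association) for some n ≥ 0. -/
def FreeLD.ltL (a b : FreeLD) : Prop :=
  ∃ (c : FreeLD) (l : List FreeLD), b = List.foldl FreeLD.mul (FreeLD.mul a c) l

/-- Theorem 1(vi), first part: left multiplication is cancellative in the free left
distributive algebra (assuming the Laver–Dehornoy theorem that <_L is an
irreflexive linear order, and monotonicity of left multiplication). -/
theorem FreeLD.mul_left_cancel_iff
    (hirr : ∀ a : FreeLD, ¬ FreeLD.ltL a a)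
    (htrans : ∀ a b c : FreeLD, FreeLD.ltL a b → FreeLD.ltL b c → FreeLD.ltL a c)
    (htri : ∀ a b : FreeLD, FreeLD.ltL a b ∨ a = b ∨ FreeLD.ltL b a)
    (hmono : ∀ p a b : FreeLD, FreeLD.ltL a b → FreeLD.ltL (FreeLD.mul p a) (FreeLD.mul p b)) :
    ∀ p q r : FreeLD, FreeLD.mul p q = FreeLD.mul p r ↔ q = r := by
  intro p q r
  constructor
  · intro h
    rcases htri q r with hlt | he | hgt
    · exact absurd (h ▸ hmono p q r hlt) (hirr _)
    · exact he
    · exact absurd (h ▸ hmono p r q hgt) (hirr _)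
  · intro h; rw [h]
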